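/- Suppose q is prime, p' ≥ 1 is coprime to q, (p' : G) ∈ N_{p,q}, and the division sequence C_{p·p',q} has a single equivalence class. Then N_{p,q} = ⊤, i.e., H_{p,q} is trivial. -/

import Mathlib

abbrev G : Type := {x : ℚ // 0 < x}

def toG (c : ℕ+) : G := ⟨(c : ℚ), by exact_mod_cast c.pos⟩

def Cmap (p q : ℕ+) (c : ℕ+) : ℕ+ :=
  if h : (q : ℕ) ∣ (c : ℕ) then
    ⟨(c : ℕ) / (q : ℕ), Nat.div_pos (Nat.le_of_dvd c.pos h) q.pos⟩
  else p * c + 1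

def E (p q : ℕ+) : ℕ+ → ℕ+ → Prop := Relation.EqvGen (fun c d => d = Cmap p q c)

def Npq (p q : ℕ+) : Subgroup G :=
  Subgroup.closure ({toG q} ∪ {x : G | ∃ c d : ℕ+, E p q c d ∧ x = toG c / toG d})

lemma toG_mul (a b : ℕ+) : toG (a * b) = toG a * toG b := by
  apply Subtype.ext
  show ((a * b : ℕ+) : ℚ) = (a : ℚ) * (b : ℚ)
  push_cast
  ring

lemma toG_one : toG 1 = 1 := by
  apply Subtype.ext
  show ((1 : ℕ+) : ℚ) = 1
  norm_cast

lemma toG_q_mem (p q : ℕ+) : toG q ∈ Npq p q :=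
  Subgroup.subset_closure (Or.inl rfl)

lemma step_mem (p p' q : ℕ+) (hq : (q : ℕ).Prime)
    (hcop : ¬ (q : ℕ) ∣ (p' : ℕ)) (h : toG p' ∈ Npq p q) (c : ℕ+) :
    toG c / toG (Cmap (p * p') q c) ∈ Npq p q := by
  by_cases hd : (q : ℕ) ∣ (c : ℕ)
  · have heq : toG c = toG q * toG (Cmap (p * p') q c) := by
      apply Subtype.ext
      show ((c : ℕ+) : ℚ) = (q : ℚ) * _
      rw [show Cmap (p * p') q c = ⟨(c : ℕ) / (q : ℕ), Nat.div_pos (Nat.le_of_dvd c.pos hd) q.pos⟩ from dif_pos hd]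
      show ((c : ℚ)) = (q : ℚ) * (((c : ℕ) / (q : ℕ) : ℕ) : ℚ)
      rw [Nat.cast_div hd (by exact_mod_cast hq.pos.ne')]
      field_simp
    rw [heq, mul_div_assoc, div_self', mul_one]
    exact toG_q_mem p q
  · have hqd : ¬ (q : ℕ) ∣ ((p' * c : ℕ+) : ℕ) := by
      rw [PNat.mul_coe]
      intro hdvd
      rcases (Nat.Prime.dvd_mul hq).1 hdvd with h1 | h1
      · exact hcop h1
      · exact hd h1
    have heq : Cmap p q (p' * c) = Cmap (p * p') q c := by
      rw [show Cmap p q (p' * c) = p * (p' * c) + 1 from dif_neg hqd,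
        show Cmap (p * p') q c = p * p' * c + 1 from dif_neg hd, ← mul_assoc]
    have hE : E p q (p' * c) (Cmap p q (p' * c)) :=
      Relation.EqvGen.rel _ _ rfl
    have hmem : toG (p' * c) / toG (Cmap p q (p' * c)) ∈ Npq p q :=
      Subgroup.subset_closure (Or.inr ⟨_, _, hE, rfl⟩)
    rw [heq, toG_mul] at hmem
    have : toG c / toG (Cmap (p * p') q c) =
        (toG p')⁻¹ * (toG p' * toG c / toG (Cmap (p * p') q c)) := by
      rw [mul_div_assoc, ← mul_assoc, inv_mul_cancel, one_mul]
    rw [this]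
    exact mul_mem (inv_mem h) hmem

lemma ratio_mem (p p' q : ℕ+) (hq : (q : ℕ).Prime)
    (hcop : ¬ (q : ℕ) ∣ (p' : ℕ)) (h : toG p' ∈ Npq p q) {c d : ℕ+}
    (hE : E (p * p') q c d) : toG c / toG d ∈ Npq p q := by
  induction hE with
  | rel a b hab => subst hab; exact step_mem p p' q hq hcop h a
  | refl a => rw [div_self']; exact one_mem _
  | symm a b _ ih =>
      have := inv_mem ih
      rwa [inv_div] at this
  | trans a b c _ _ ih1 ih2 =>
      have e : toG a / toG c = toG a / toG b * (toG b / toG c) := by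
        apply Subtype.ext
        show (toG a : ℚ) / toG c = (toG a : ℚ) / toG b * ((toG b : ℚ) / toG c)
        have hb := (toG b).2.ne'
        have hc := (toG c).2.ne'
        field_simp
      rw [e]; exact mul_mem ih1 ih2

lemma toG_mem (p p' q : ℕ+) (hq : (q : ℕ).Prime)
    (hcop : ¬ (q : ℕ) ∣ (p' : ℕ)) (h : toG p' ∈ Npq p q)
    (hone : ∀ c : ℕ+, E (p * p') q c 1) (c : ℕ+) : toG c ∈ Npq p q := by
  have := ratio_mem p p' q hq hcop h (hone c)
  rwa [toG_one, div_one] at this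

theorem stmt13 (p p' q : ℕ+) (hp : 1 ≤ p) (hp' : 1 ≤ p') (hq : (q : ℕ).Prime)
    (hcop : ¬ (q : ℕ) ∣ (p' : ℕ)) (h : toG p' ∈ Npq p q)
    (hone : ∀ c : ℕ+, E (p * p') q c 1) :
    Npq p q = ⊤ ∧ Subsingleton (G ⧸ Npq p q) := by
  have htop : Npq p q = ⊤ := by
    rw [Subgroup.eq_top_iff']
    intro x
    have hnum : 0 < x.val.num := Rat.num_pos.2 x.prop
    set a : ℕ+ := ⟨x.val.num.toNat, by omega⟩
    set b : ℕ+ := ⟨x.val.den, x.val.pos⟩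
    have hx : x = toG a / toG b := by
      apply Subtype.ext
      show x.val = ((a : ℕ) : ℚ) / ((b : ℕ) : ℚ)
      have h2 : ((x.val.num.toNat : ℕ) : ℤ) = x.val.num := Int.toNat_of_nonneg hnum.le
      have : ((a : ℕ) : ℚ) = (x.val.num : ℚ) := by exact_mod_cast h2
      rw [this]
      show x.val = (x.val.num : ℚ) / (x.val.den : ℚ)
      rw [Rat.num_div_den]
    rw [hx]
    exact div_mem (toG_mem p p' q hq hcop h hone a) (toG_mem p p' q hq hcop h hone b)
  refine ⟨htop, ?_⟩
  rw [htop]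
  exact QuotientGroup.subsingleton_quotient_top
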